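/- Let G be a connected simple graph on a finite vertex set V, let {c,d} be a bridge of G, and let S = { v ∈ V : v is reachable from c in the graph obtained from G by deleting the edge {c,d} }. Let {a,b} be an edge of G, distinct from {c,d}, with a ∉ S and b ∉ S, which is not a bridge of G, and let G' be the graph obtained from G by deleting {a,b}. Let p : V → ℝ satisfy ∑_{v ∈ V} p v = 0, let θ : V → ℝ satisfy G.lapMatrix ℝ *ᵥ θ = p, and let θ' : V → ℝ satisfy G'.lapMatrix ℝ *ᵥ θ' = p. Then θ' u − θ' v = θ u − θ v for all u, v ∈ S, and θ' c − θ' d = θ c − θ d; that is, the failure of a non-bridge line on one side of a bridge does not change the DC power flows on the other side of the bridge nor on the bridge itself. -/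

import Mathlib

open Matrix

open Finset in
private lemma lap_apply' {V : Type*} [Fintype V] [DecidableEq V]
    (H : SimpleGraph V) [DecidableRel H.Adj] (x : V → ℝ) (u : V) :
    (H.lapMatrix ℝ *ᵥ x) u = ∑ w, if H.Adj u w then x u - x w else 0 := by
  rw [SimpleGraph.lapMatrix_mulVec_apply]
  have h1 : (∑ w, if H.Adj u w then x u - x w else 0)
      = ∑ w ∈ H.neighborFinset u, (x u - x w) := by
    rw [SimpleGraph.neighborFinset_eq_filter, Finset.sum_filter]
  rw [h1, Finset.sum_sub_distrib, Finset.sum_const, nsmul_eq_mul]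
  congr 1

open Finset in
private lemma sum_lap_subset' {V : Type*} [Fintype V] [DecidableEq V]
    (H : SimpleGraph V) [DecidableRel H.Adj] (T : Finset V) (c d : V)
    (hc : c ∈ T) (hd : d ∉ T) (hcd : H.Adj c d)
    (hcross : ∀ u ∈ T, ∀ w ∉ T, H.Adj u w → u = c ∧ w = d) (x : V → ℝ) :
    ∑ u ∈ T, (H.lapMatrix ℝ *ᵥ x) u = x c - x d := by
  simp_rw [lap_apply']
  have hsplit : ∀ u : V, (∑ w, if H.Adj u w then x u - x w else 0)
      = (∑ w ∈ T, if H.Adj u w then x u - x w else 0)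
        + ∑ w ∈ Tᶜ, if H.Adj u w then x u - x w else 0 :=
    fun u => (Finset.sum_add_sum_compl T _).symm
  simp_rw [hsplit, Finset.sum_add_distrib]
  have hanti : (∑ u ∈ T, ∑ w ∈ T, if H.Adj u w then x u - x w else 0) = 0 := by
    have hswap : (∑ u ∈ T, ∑ w ∈ T, if H.Adj u w then x u - x w else 0)
        = ∑ u ∈ T, ∑ w ∈ T, if H.Adj w u then x w - x u else 0 := Finset.sum_comm
    have hneg : (∑ u ∈ T, ∑ w ∈ T, if H.Adj w u then x w - x u else 0)
        = -∑ u ∈ T, ∑ w ∈ T, if H.Adj u w then x u - x w else 0 := by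
      rw [← Finset.sum_neg_distrib]
      refine Finset.sum_congr rfl fun u _ => ?_
      rw [← Finset.sum_neg_distrib]
      refine Finset.sum_congr rfl fun w _ => ?_
      by_cases h : H.Adj u w
      · rw [if_pos h, if_pos h.symm]; ring
      · rw [if_neg h, if_neg (fun h' => h h'.symm)]; ring
    linarith [hswap, hneg, hswap.trans hneg]
  rw [hanti, zero_add]
  have hmain : (∑ u ∈ T, ∑ w ∈ Tᶜ, if H.Adj u w then x u - x w else 0)
      = ∑ u ∈ T, if u = c then x c - x d else 0 := by
    refine Finset.sum_congr rfl fun u hu => ?_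
    by_cases huc : u = c
    · subst huc
      rw [if_pos rfl]
      rw [Finset.sum_eq_single d]
      · rw [if_pos hcd]
      · intro w hw hwd
        rw [Finset.mem_compl] at hw
        by_cases h : H.Adj u w
        · exact absurd (hcross u hu w hw h).2 hwd
        · rw [if_neg h]
      · intro hdmem
        exact absurd (Finset.mem_compl.mpr hd) hdmem
    · rw [if_neg huc]
      refine Finset.sum_eq_zero fun w hw => ?_
      rw [Finset.mem_compl] at hw
      by_cases h : H.Adj u w
      · exact absurd (hcross u hu w hw h).1 huc
      · rw [if_neg h]
  rw [hmain, Finset.sum_ite_eq' T c, if_pos hc]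

open scoped Classical in
theorem flow_unchanged_across_bridge {V : Type*} [Fintype V] [DecidableEq V]
    (G : SimpleGraph V) [DecidableRel G.Adj] (hG : G.Connected)
    (c d : V) (hbr : G.IsBridge s(c, d))
    (S : Set V) (hS : S = {v | (G.deleteEdges {s(c, d)}).Reachable c v})
    (a b : V) (hab : G.Adj a b) (hne : s(a, b) ≠ s(c, d))
    (haS : a ∉ S) (hbS : b ∉ S) (hnb : ¬ G.IsBridge s(a, b))
    (p : V → ℝ) (hp : ∑ v, p v = 0)
    (θ : V → ℝ) (hθ : G.lapMatrix ℝ *ᵥ θ = p)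
    (θ' : V → ℝ) (hθ' : (G.deleteEdges {s(a, b)}).lapMatrix ℝ *ᵥ θ' = p) :
    (∀ u ∈ S, ∀ v ∈ S, θ' u - θ' v = θ u - θ v) ∧ θ' c - θ' d = θ c - θ d := by
  classical
  have hcd : G.Adj c d := hbr.reachable_iff_adj.mp (hG.preconnected c d)
  have hcS : c ∈ S := by rw [hS]; exact SimpleGraph.Reachable.refl c
  have hdS : d ∉ S := by
    intro h
    rw [hS] at h
    exact (SimpleGraph.isBridge_iff.mp hbr) h
  -- edges of G crossing the boundary of S are exactly (c,d)
  have cross : ∀ u ∈ S, ∀ w, w ∉ S → G.Adj u w → u = c ∧ w = d := by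
    intro u hu w hw huw
    by_cases he : s(u, w) = s(c, d)
    · rcases Sym2.eq_iff.mp he with ⟨rfl, rfl⟩ | ⟨rfl, rfl⟩
      · exact ⟨rfl, rfl⟩
      · exact absurd hu hdS
    · exfalso
      have hadj : (G.deleteEdges {s(c, d)}).Adj u w := by
        rw [SimpleGraph.deleteEdges_adj]
        exact ⟨huw, by simpa using he⟩
      rw [hS] at hu hw
      exact hw (hu.trans hadj.reachable)
  have hSa : ∀ u ∈ S, u ≠ a ∧ u ≠ b := by
    intro u hu
    constructor <;> rintro rfl <;> [exact haS hu; exact hbS hu]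
  -- rows of the two Laplacians agree away from a, b
  have rowEq : ∀ u, u ≠ a → u ≠ b → ∀ x : V → ℝ,
      ((G.deleteEdges {s(a, b)}).lapMatrix ℝ *ᵥ x) u = (G.lapMatrix ℝ *ᵥ x) u := by
    intro u hua hub x
    rw [lap_apply', lap_apply']
    refine Finset.sum_congr rfl fun w _ => ?_
    have : (G.deleteEdges {s(a, b)}).Adj u w ↔ G.Adj u w := by
      rw [SimpleGraph.deleteEdges_adj]
      constructor
      · exact fun h => h.1
      · intro h
        refine ⟨h, ?_⟩
        simp only [Set.mem_singleton_iff, Sym2.eq_iff]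
        rintro (⟨rfl, rfl⟩ | ⟨rfl, rfl⟩)
        · exact hua rfl
        · exact hub rfl
    by_cases h : G.Adj u w
    · rw [if_pos h, if_pos (this.mpr h)]
    · rw [if_neg h, if_neg (fun h' => h (this.mp h'))]
  set T : Finset V := Finset.univ.filter (· ∈ S) with hT
  have hmemT : ∀ u : V, u ∈ T ↔ u ∈ S := by
    intro u; simp [hT]
  -- the bridge flow identity
  have hG'cd : (G.deleteEdges {s(a, b)}).Adj c d := by
    rw [SimpleGraph.deleteEdges_adj]
    exact ⟨hcd, by simpa using (Ne.symm hne)⟩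
  have e1 : ∑ u ∈ T, p u = θ c - θ d := by
    rw [← hθ]
    exact sum_lap_subset' G T c d ((hmemT c).mpr hcS) (fun h => hdS ((hmemT d).mp h)) hcd
      (fun u hu w hw h => cross u ((hmemT u).mp hu) w (fun h' => hw ((hmemT w).mpr h')) h) θ
  have e2 : ∑ u ∈ T, p u = θ' c - θ' d := by
    rw [← hθ']
    exact sum_lap_subset' _ T c d ((hmemT c).mpr hcS) (fun h => hdS ((hmemT d).mp h)) hG'cd
      (fun u hu w hw h => cross u ((hmemT u).mp hu) w (fun h' => hw ((hmemT w).mpr h'))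
        ((SimpleGraph.deleteEdges_adj).mp h).1) θ'
  have key2 : θ' c - θ' d = θ c - θ d := by rw [← e1, ← e2]
  refine ⟨?_, key2⟩
  -- δ := θ' - θ is G-harmonic on S
  set δ : V → ℝ := fun v => θ' v - θ v with hδ
  have hδcd : δ c = δ d := by simp only [hδ]; linarith
  have hδ0 : ∀ u ∈ S, (G.lapMatrix ℝ *ᵥ δ) u = 0 := by
    intro u hu
    have h1 : (G.lapMatrix ℝ *ᵥ δ) u = (G.lapMatrix ℝ *ᵥ θ') u - (G.lapMatrix ℝ *ᵥ θ) u := by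
      have : δ = θ' - θ := rfl
      rw [this, Matrix.mulVec_sub, Pi.sub_apply]
    rw [h1, hθ, ← rowEq u (hSa u hu).1 (hSa u hu).2 θ', hθ']
    ring
  -- the graph with both edges removed
  set H : SimpleGraph V := G.deleteEdges {s(c, d), s(a, b)} with hH
  have hHadj : ∀ u w, H.Adj u w ↔ G.Adj u w ∧ s(u, w) ≠ s(c, d) ∧ s(u, w) ≠ s(a, b) := by
    intro u w
    rw [hH, SimpleGraph.deleteEdges_adj]
    simp [not_or, and_assoc]
  set δ' : V → ℝ := fun v => if v ∈ S then δ v else δ c with hδ'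
  have hδ'S : ∀ v ∈ S, δ' v = δ v := fun v hv => by simp [hδ', hv]
  have hδ'n : ∀ v, v ∉ S → δ' v = δ c := fun v hv => by simp [hδ', hv]
  have hH0 : H.lapMatrix ℝ *ᵥ δ' = 0 := by
    funext u
    rw [lap_apply', Pi.zero_apply]
    by_cases hu : u ∈ S
    · have heq : ∀ w : V, (if H.Adj u w then δ' u - δ' w else 0)
          = (if G.Adj u w then δ u - δ w else 0) := by
        intro w
        by_cases hadj : G.Adj u w
        · by_cases hwS : w ∈ S
          · have hHuw : H.Adj u w := by
              rw [hHadj]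
              refine ⟨hadj, ?_, ?_⟩
              · intro he
                rcases Sym2.eq_iff.mp he with ⟨rfl, rfl⟩ | ⟨rfl, rfl⟩
                · exact hdS hwS
                · exact hdS hu
              · intro he
                rcases Sym2.eq_iff.mp he with ⟨rfl, rfl⟩ | ⟨rfl, rfl⟩
                · exact haS hu
                · exact hbS hu
            rw [if_pos hHuw, if_pos hadj, hδ'S u hu, hδ'S w hwS]
          · obtain ⟨rfl, rfl⟩ := cross u hu w hwS hadj
            have hnH : ¬ H.Adj u w := by
              rw [hHadj]
              rintro ⟨-, h2, -⟩
              exact h2 rfl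
            rw [if_neg hnH, if_pos hadj, hδcd, sub_self]
        · have hnH : ¬ H.Adj u w := fun h => hadj ((hHadj u w).mp h).1
          rw [if_neg hnH, if_neg hadj]
      calc ∑ w, (if H.Adj u w then δ' u - δ' w else 0)
          = ∑ w, (if G.Adj u w then δ u - δ w else 0) := Finset.sum_congr rfl fun w _ => heq w
        _ = (G.lapMatrix ℝ *ᵥ δ) u := (lap_apply' G δ u).symm
        _ = 0 := hδ0 u hu
    · refine Finset.sum_eq_zero fun w _ => ?_
      by_cases hadj : H.Adj u w
      · have hwS : w ∉ S := by
          intro hwS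
          obtain ⟨rfl, rfl⟩ := cross w hwS u hu ((hHadj u w).mp hadj).1.symm
          exact ((hHadj u w).mp hadj).2.1 (Sym2.eq_swap)
        rw [if_pos hadj, hδ'n u hu, hδ'n w hwS, sub_self]
      · rw [if_neg hadj]
  have reach : ∀ i j, H.Reachable i j → δ' i = δ' j := by
    have := (SimpleGraph.lapMatrix_mulVec_eq_zero_iff_forall_reachable (G := H) (x := δ')).mp
      hH0
    exact this
  have reachS : ∀ v ∈ S, H.Reachable c v := by
    have claim : ∀ {x y : V} (w : (G.deleteEdges {s(c, d)}).Walk x y),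
        x ∈ S → H.Reachable x y := by
      intro x y w
      induction w with
      | nil => exact fun _ => SimpleGraph.Reachable.refl _
      | @cons x' m y' h q ih =>
        intro hx
        have hm : m ∈ S := by
          rw [hS] at hx ⊢
          exact hx.trans h.reachable
        have hHxm : H.Adj x' m := by
          rw [hHadj]
          rw [SimpleGraph.deleteEdges_adj] at h
          refine ⟨h.1, by simpa using h.2, ?_⟩
          intro he
          rcases Sym2.eq_iff.mp he with ⟨rfl, rfl⟩ | ⟨rfl, rfl⟩
          · exact haS hx
          · exact hbS hx
        exact hHxm.reachable.trans (ih hm)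
    intro v hv
    rw [hS] at hv
    obtain ⟨w⟩ := hv
    exact claim w hcS
  intro u hu v hv
  have h1 : δ' u = δ' v := reach u v ((reachS u hu).symm.trans (reachS v hv))
  rw [hδ'S u hu, hδ'S v hv] at h1
  simp only [hδ] at h1
  linarith
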